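/- For n ≥ 1 and k ≥ 1, define on the real vector space of real symmetric n×n matrices the k-Schatten norm ‖A‖_k = (∑_{i=1}^n |λ_i(A)|^k)^{1/k}, where λ_1(A),…,λ_n(A) are the eigenvalues of A. Then: (i) A ↦ ‖A‖_k is a convex function on the space of real symmetric n×n matrices; (ii) if k ≥ 2, then for all real symmetric A, B: |‖A‖_k − ‖B‖_k| ≤ √2·(∑_{1≤i≤j≤n} (A_{ij} − B_{ij})²)^{1/2}; (iii) for k = 1, for all real symmetric A, B: |‖A‖_1 − ‖B‖_1| ≤ √(2n)·(∑_{1≤i≤j≤n} (A_{ij} − B_{ij})²)^{1/2}. -/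

import Mathlib

/-- Eigenvalues of a real matrix (meaningful when the matrix is symmetric/Hermitian). -/
noncomputable def eigsOf {n : ℕ} (M : Matrix (Fin n) (Fin n) ℝ) : Fin n → ℝ :=
  if h : M.IsHermitian then h.eigenvalues else 0

/-- The `k`-Schatten norm `‖A‖_k = (∑ |λ_i(A)|^k)^{1/k}` of a real symmetric matrix. -/
noncomputable def schatten {n : ℕ} (k : ℕ) (A : Matrix (Fin n) (Fin n) ℝ) : ℝ :=
  (∑ i : Fin n, |eigsOf A i| ^ k) ^ ((1 : ℝ) / k)

/-- Sum of squared differences over the diagonal and strictly-upper-triangular entries. -/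
def upperSq {n : ℕ} (A B : Matrix (Fin n) (Fin n) ℝ) : ℝ :=
  ∑ p ∈ Finset.univ.filter (fun p : Fin n × Fin n => p.1 ≤ p.2), (A p.1 p.2 - B p.1 p.2) ^ 2

open Finset Matrix

variable {n k : ℕ}


variable {n k : ℕ}

lemma aux_row {W : Matrix (Fin n) (Fin n) ℝ} (h : W * star W = 1) (i : Fin n) :
    ∑ j, W i j ^ 2 = 1 := by
  have := congrArg (fun M : Matrix (Fin n) (Fin n) ℝ => M i i) h
  simpa [Matrix.mul_apply, Matrix.one_apply, Matrix.star_apply, sq] using this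

lemma aux_col {W : Matrix (Fin n) (Fin n) ℝ} (h : star W * W = 1) (j : Fin n) :
    ∑ i, W i j ^ 2 = 1 := by
  have := congrArg (fun M : Matrix (Fin n) (Fin n) ℝ => M j j) h
  simpa [Matrix.mul_apply, Matrix.one_apply, Matrix.star_apply, sq] using this

lemma aux_entry (d : Fin n → ℝ) (W : Matrix (Fin n) (Fin n) ℝ) (i : Fin n) :
    (W * Matrix.diagonal d * star W) i i = ∑ j, W i j ^ 2 * d j := by
  rw [Matrix.mul_apply]
  refine Finset.sum_congr rfl fun j _ => ?_
  rw [Matrix.mul_diagonal, Matrix.star_apply, star_trivial]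
  ring

lemma aux_key (d : Fin n → ℝ) (W : Matrix (Fin n) (Fin n) ℝ)
    (h1 : W * star W = 1) (h2 : star W * W = 1) :
    ∑ i, |(W * Matrix.diagonal d * star W) i i| ^ k ≤ ∑ j, |d j| ^ k := by
  have step : ∀ i, |(W * Matrix.diagonal d * star W) i i| ^ k
      ≤ ∑ j, W i j ^ 2 * |d j| ^ k := by
    intro i
    rw [aux_entry]
    have hA : |∑ j, W i j ^ 2 * d j| ≤ ∑ j, W i j ^ 2 * |d j| := by
      refine (Finset.abs_sum_le_sum_abs _ _).trans (le_of_eq ?_)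
      exact Finset.sum_congr rfl fun j _ => by
        rw [abs_mul, abs_of_nonneg (sq_nonneg _)]
    have hB : (∑ j, W i j ^ 2 * |d j|) ^ k ≤ ∑ j, W i j ^ 2 * |d j| ^ k := by
      have := (convexOn_pow (𝕜 := ℝ) k).map_sum_le (t := Finset.univ)
        (w := fun j => W i j ^ 2) (p := fun j => |d j|)
        (fun j _ => sq_nonneg _) (aux_row h1 i) (fun j _ => Set.mem_Ici.2 (abs_nonneg _))
      simpa [smul_eq_mul] using this
    calc |∑ j, W i j ^ 2 * d j| ^ k ≤ (∑ j, W i j ^ 2 * |d j|) ^ k :=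
          pow_le_pow_left₀ (abs_nonneg _) hA k
      _ ≤ _ := hB
  calc ∑ i, |(W * Matrix.diagonal d * star W) i i| ^ k
      ≤ ∑ i, ∑ j, W i j ^ 2 * |d j| ^ k := Finset.sum_le_sum fun i _ => step i
    _ = ∑ j, (∑ i, W i j ^ 2) * |d j| ^ k := by
        rw [Finset.sum_comm]
        exact Finset.sum_congr rfl fun j _ => (Finset.sum_mul _ _ _).symm
    _ = ∑ j, |d j| ^ k := by
        exact Finset.sum_congr rfl fun j _ => by rw [aux_col h2 j, one_mul]

lemma aux_conj (C : Matrix (Fin n) (Fin n) ℝ) (hC : C.IsHermitian)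
    (V : Matrix (Fin n) (Fin n) ℝ) (h1 : V * star V = 1) (h2 : star V * V = 1) :
    ∑ i, |(V * C * star V) i i| ^ k ≤ ∑ j, |hC.eigenvalues j| ^ k := by
  set U : Matrix (Fin n) (Fin n) ℝ := (hC.eigenvectorUnitary : Matrix (Fin n) (Fin n) ℝ) with hUdef
  have hU1 : U * star U = 1 := Unitary.coe_mul_star_self _
  have hU2 : star U * U = 1 := Unitary.coe_star_mul_self _
  have hspec : C = U * Matrix.diagonal hC.eigenvalues * star U := by
    have := hC.spectral_theorem
    rwa [Unitary.conjStarAlgAut_apply, RCLike.ofReal_real_eq_id, Function.id_comp] at this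
  have hW1 : (V * U) * star (V * U) = 1 := by
    rw [StarMul.star_mul, mul_assoc, ← mul_assoc U, hU1, one_mul, h1]
  have hW2 : star (V * U) * (V * U) = 1 := by
    rw [StarMul.star_mul, mul_assoc, ← mul_assoc (star V), h2, one_mul, hU2]
  have hre : V * C * star V = (V * U) * Matrix.diagonal hC.eigenvalues * star (V * U) := by
    conv_lhs => rw [hspec]
    rw [StarMul.star_mul (V) (U)]
    noncomm_ring
  rw [hre]
  exact aux_key _ _ hW1 hW2

lemma aux_diag_eq (C : Matrix (Fin n) (Fin n) ℝ) (hC : C.IsHermitian) (i : Fin n) :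
    ((star (hC.eigenvectorUnitary : Matrix (Fin n) (Fin n) ℝ)) * C *
      star (star (hC.eigenvectorUnitary : Matrix (Fin n) (Fin n) ℝ))) i i = hC.eigenvalues i := by
  rw [star_star]
  have := hC.conjStarAlgAut_star_eigenvectorUnitary
  rw [Unitary.conjStarAlgAut_star_apply, RCLike.ofReal_real_eq_id, Function.id_comp] at this
  rw [this, Matrix.diagonal_apply_eq]

lemma aux_tri (hk : 1 ≤ k) (x y : Fin n → ℝ) :
    (∑ i, |x i + y i| ^ k) ^ ((1:ℝ)/k) ≤
      (∑ i, |x i| ^ k) ^ ((1:ℝ)/k) + (∑ i, |y i| ^ k) ^ ((1:ℝ)/k) := by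
  have hk' : (1:ℝ) ≤ (k:ℝ) := by exact_mod_cast hk
  have := Real.Lp_add_le (Finset.univ) x y hk'
  simpa [← Real.rpow_natCast] using this

lemma aux_rpow_mono {x y : ℝ} (hx : 0 ≤ x) (h : x ≤ y) :
    x ^ ((1:ℝ)/k) ≤ y ^ ((1:ℝ)/k) :=
  Real.rpow_le_rpow hx h (by positivity)

lemma aux_smul (hk : 1 ≤ k) (a : ℝ) (ha : 0 ≤ a) (x : Fin n → ℝ) :
    (∑ i, |a * x i| ^ k) ^ ((1:ℝ)/k) = a * (∑ i, |x i| ^ k) ^ ((1:ℝ)/k) := by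
  have hk0 : (k:ℝ) ≠ 0 := by positivity
  have h1 : ∑ i, |a * x i| ^ k = a ^ k * ∑ i, |x i| ^ k := by
    rw [Finset.mul_sum]
    exact Finset.sum_congr rfl fun i _ => by
      rw [abs_mul, mul_pow, abs_of_nonneg ha]
  rw [h1, Real.mul_rpow (by positivity) (Finset.sum_nonneg fun i _ => by positivity),
    ← Real.rpow_natCast a k, ← Real.rpow_mul ha]
  rw [mul_one_div, div_self hk0, Real.rpow_one]

lemma schatten_eq {A : Matrix (Fin n) (Fin n) ℝ} (hA : A.IsHermitian) :
    schatten k A = (∑ i, |hA.eigenvalues i| ^ k) ^ ((1:ℝ)/k) := by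
  rw [schatten]
  congr 2
  unfold eigsOf
  rw [dif_pos hA]

/-- The Schatten quasi-representation: schatten as ℓ-norm of the diagonal of the
conjugation by the eigenvector matrix. -/
lemma schatten_eq_diag {A : Matrix (Fin n) (Fin n) ℝ} (hA : A.IsHermitian) :
    schatten k A = (∑ i,
      |((star (hA.eigenvectorUnitary : Matrix (Fin n) (Fin n) ℝ)) * A *
        star (star (hA.eigenvectorUnitary : Matrix (Fin n) (Fin n) ℝ))) i i| ^ k) ^ ((1:ℝ)/k) := by
  rw [schatten_eq hA]
  congr 1
  exact Finset.sum_congr rfl fun i _ => by rw [aux_diag_eq A hA i]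

lemma schatten_conj_le {C : Matrix (Fin n) (Fin n) ℝ} (hC : C.IsHermitian)
    (V : Matrix (Fin n) (Fin n) ℝ) (h1 : V * star V = 1) (h2 : star V * V = 1) :
    (∑ i, |(V * C * star V) i i| ^ k) ^ ((1:ℝ)/k) ≤ schatten k C := by
  rw [schatten_eq hC]
  exact aux_rpow_mono (Finset.sum_nonneg fun i _ => by positivity) (aux_conj C hC V h1 h2)

lemma schatten_abs_sub_le (hk : 1 ≤ k) (A B : Matrix (Fin n) (Fin n) ℝ)
    (hA : A.IsHermitian) (hB : B.IsHermitian) :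
    |schatten k A - schatten k B| ≤ schatten k (A - B) := by
  have hAB : (A - B).IsHermitian := hA.sub hB
  rw [abs_sub_le_iff]
  constructor
  · -- diagonalize A
    set V : Matrix (Fin n) (Fin n) ℝ := star (hA.eigenvectorUnitary : Matrix (Fin n) (Fin n) ℝ)
      with hV
    have h1 : V * star V = 1 := by
      rw [hV, star_star]; exact Unitary.coe_star_mul_self _
    have h2 : star V * V = 1 := by
      rw [hV, star_star]; exact Unitary.coe_mul_star_self _
    have hsplit : V * A * star V = V * B * star V + V * (A - B) * star V := by
      noncomm_ring
    have := schatten_eq_diag (k := k) hA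
    rw [← hV] at this
    rw [this, hsplit]
    refine sub_le_iff_le_add.2 ?_
    calc (∑ i, |(V * B * star V + V * (A - B) * star V) i i| ^ k) ^ ((1:ℝ)/k)
        = (∑ i, |(V * B * star V) i i + (V * (A - B) * star V) i i| ^ k) ^ ((1:ℝ)/k) := by
          simp [Matrix.add_apply]
      _ ≤ (∑ i, |(V * B * star V) i i| ^ k) ^ ((1:ℝ)/k) +
          (∑ i, |(V * (A - B) * star V) i i| ^ k) ^ ((1:ℝ)/k) := aux_tri hk _ _
      _ ≤ schatten k B + schatten k (A - B) :=
          add_le_add (schatten_conj_le hB V h1 h2) (schatten_conj_le hAB V h1 h2)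
      _ = schatten k (A - B) + schatten k B := by ring
  · -- diagonalize B
    set V : Matrix (Fin n) (Fin n) ℝ := star (hB.eigenvectorUnitary : Matrix (Fin n) (Fin n) ℝ)
      with hV
    have h1 : V * star V = 1 := by
      rw [hV, star_star]; exact Unitary.coe_star_mul_self _
    have h2 : star V * V = 1 := by
      rw [hV, star_star]; exact Unitary.coe_mul_star_self _
    have hsplit : V * B * star V = V * A * star V + V * (A - B) * star V * (-1) := by
      noncomm_ring
    have := schatten_eq_diag (k := k) hB
    rw [← hV] at this
    rw [this, hsplit]
    refine sub_le_iff_le_add.2 ?_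
    calc (∑ i, |(V * A * star V + V * (A - B) * star V * (-1)) i i| ^ k) ^ ((1:ℝ)/k)
        = (∑ i, |(V * A * star V) i i + (-((V * (A - B) * star V) i i))| ^ k) ^ ((1:ℝ)/k) := by
          simp [Matrix.add_apply, Matrix.mul_apply]
      _ ≤ (∑ i, |(V * A * star V) i i| ^ k) ^ ((1:ℝ)/k) +
          (∑ i, |(-((V * (A - B) * star V) i i))| ^ k) ^ ((1:ℝ)/k) :=
            aux_tri hk _ (fun i => -((V * (A - B) * star V) i i))
      _ = (∑ i, |(V * A * star V) i i| ^ k) ^ ((1:ℝ)/k) +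
          (∑ i, |(V * (A - B) * star V) i i| ^ k) ^ ((1:ℝ)/k) := by simp [abs_neg]
      _ ≤ schatten k A + schatten k (A - B) :=
          add_le_add (schatten_conj_le hA V h1 h2) (schatten_conj_le hAB V h1 h2)
      _ = schatten k (A - B) + schatten k A := by ring

lemma aux_herm_smul {A : Matrix (Fin n) (Fin n) ℝ} (hA : A.IsHermitian) (a : ℝ) :
    (a • A).IsHermitian := by
  have : (a • A)ᴴ = star a • Aᴴ := Matrix.conjTranspose_smul a A
  rw [Matrix.IsHermitian, this, star_trivial, hA]

lemma schatten_convexOn (hk : 1 ≤ k) :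
    ConvexOn ℝ {A : Matrix (Fin n) (Fin n) ℝ | A.IsHermitian} (schatten k) := by
  have hset : Convex ℝ {A : Matrix (Fin n) (Fin n) ℝ | A.IsHermitian} := by
    intro A hA B hB a b ha hb hab
    exact Matrix.IsHermitian.add (aux_herm_smul hA a) (aux_herm_smul hB b)
  refine ⟨hset, ?_⟩
  intro A hA B hB a b ha hb hab
  simp only [Set.mem_setOf_eq] at hA hB
  have hC : (a • A + b • B).IsHermitian := Matrix.IsHermitian.add (aux_herm_smul hA a) (aux_herm_smul hB b)
  set V : Matrix (Fin n) (Fin n) ℝ := star (hC.eigenvectorUnitary : Matrix (Fin n) (Fin n) ℝ)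
    with hV
  have h1 : V * star V = 1 := by
    rw [hV, star_star]; exact Unitary.coe_star_mul_self _
  have h2 : star V * V = 1 := by
    rw [hV, star_star]; exact Unitary.coe_mul_star_self _
  have hsplit : V * (a • A + b • B) * star V =
      a • (V * A * star V) + b • (V * B * star V) := by
    rw [Matrix.mul_add, Matrix.add_mul, Matrix.mul_smul, Matrix.smul_mul,
      Matrix.mul_smul, Matrix.smul_mul]
  have heq := schatten_eq_diag (k := k) hC
  rw [← hV] at heq
  rw [heq, hsplit]
  calc (∑ i, |(a • (V * A * star V) + b • (V * B * star V)) i i| ^ k) ^ ((1:ℝ)/k)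
      = (∑ i, |a * (V * A * star V) i i + b * (V * B * star V) i i| ^ k) ^ ((1:ℝ)/k) := by
        simp [Matrix.add_apply, Matrix.smul_apply, smul_eq_mul]
    _ ≤ (∑ i, |a * (V * A * star V) i i| ^ k) ^ ((1:ℝ)/k) +
        (∑ i, |b * (V * B * star V) i i| ^ k) ^ ((1:ℝ)/k) := aux_tri hk _ _
    _ = a * (∑ i, |(V * A * star V) i i| ^ k) ^ ((1:ℝ)/k) +
        b * (∑ i, |(V * B * star V) i i| ^ k) ^ ((1:ℝ)/k) := by
        rw [aux_smul hk a ha, aux_smul hk b hb]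
    _ ≤ a * schatten k A + b * schatten k B := by
        refine add_le_add ?_ ?_
        · exact mul_le_mul_of_nonneg_left (schatten_conj_le hA V h1 h2) ha
        · exact mul_le_mul_of_nonneg_left (schatten_conj_le hB V h1 h2) hb
    _ = a • schatten k A + b • schatten k B := by simp [smul_eq_mul]

lemma aux_eig_sq {M : Matrix (Fin n) (Fin n) ℝ} (hM : M.IsHermitian) :
    ∑ i, hM.eigenvalues i ^ 2 = ∑ i, ∑ j, M i j ^ 2 := by
  set U : Matrix (Fin n) (Fin n) ℝ := (hM.eigenvectorUnitary : Matrix (Fin n) (Fin n) ℝ)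
    with hUdef
  have hU2 : star U * U = 1 := Unitary.coe_star_mul_self _
  have hspec : M = U * Matrix.diagonal hM.eigenvalues * star U := by
    have := hM.spectral_theorem
    rwa [Unitary.conjStarAlgAut_apply, RCLike.ofReal_real_eq_id, Function.id_comp] at this
  set D : Matrix (Fin n) (Fin n) ℝ := Matrix.diagonal hM.eigenvalues with hD
  have hMM : M * M = U * (D * D) * star U := by
    conv_lhs => rw [hspec]
    calc (U * D * star U) * (U * D * star U)
        = U * D * (star U * U) * D * star U := by noncomm_ring
      _ = U * (D * D) * star U := by rw [hU2, mul_one]; noncomm_ring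
  have hsym : ∀ i j, M j i = M i j := by
    intro i j
    conv_lhs => rw [← hM]
    simp [Matrix.conjTranspose_apply]
  have t1 : Matrix.trace (M * M) = ∑ i, hM.eigenvalues i ^ 2 := by
    rw [hMM, Matrix.trace_mul_cycle, ← mul_assoc, hU2, one_mul, hD,
      Matrix.diagonal_mul_diagonal, Matrix.trace_diagonal]
    exact Finset.sum_congr rfl fun i _ => (sq _).symm
  have t2 : Matrix.trace (M * M) = ∑ i, ∑ j, M i j ^ 2 := by
    rw [Matrix.trace]
    refine Finset.sum_congr rfl fun i _ => ?_
    rw [Matrix.diag_apply, Matrix.mul_apply]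
    exact Finset.sum_congr rfl fun j _ => by rw [hsym i j, sq]
  rw [← t1, t2]

lemma aux_sum_sq_le (M : Matrix (Fin n) (Fin n) ℝ) (hsym : ∀ i j, M j i = M i j) :
    ∑ i, ∑ j, M i j ^ 2 ≤
      2 * ∑ p ∈ Finset.univ.filter (fun p : Fin n × Fin n => p.1 ≤ p.2), M p.1 p.2 ^ 2 := by
  have h0 : ∑ i, ∑ j, M i j ^ 2 = ∑ p : Fin n × Fin n, M p.1 p.2 ^ 2 := by
    rw [← Finset.univ_product_univ, Finset.sum_product]
  rw [h0, ← Finset.sum_filter_add_sum_filter_not Finset.univ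
    (fun p : Fin n × Fin n => p.1 ≤ p.2) (fun p => M p.1 p.2 ^ 2), two_mul]
  refine add_le_add le_rfl ?_
  have hswap : ∑ p ∈ Finset.univ.filter (fun p : Fin n × Fin n => ¬ p.1 ≤ p.2), M p.1 p.2 ^ 2
      = ∑ p ∈ Finset.univ.filter (fun p : Fin n × Fin n => p.1 < p.2), M p.1 p.2 ^ 2 := by
    refine Finset.sum_nbij' (i := Prod.swap) (j := Prod.swap) ?_ ?_ ?_ ?_ ?_
    · intro p hp
      simp only [Finset.mem_filter, Finset.mem_univ, true_and, not_le] at hp ⊢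
      exact hp
    · intro p hp
      simp only [Finset.mem_filter, Finset.mem_univ, true_and, not_le] at hp ⊢
      exact hp
    · intro p _; exact Prod.swap_swap p
    · intro p _; exact Prod.swap_swap p
    · intro p _
      simp only [Prod.fst_swap, Prod.snd_swap]
      rw [hsym p.2 p.1]
  rw [hswap]
  refine Finset.sum_le_sum_of_subset_of_nonneg ?_ (fun p _ _ => sq_nonneg _)
  intro p hp
  simp only [Finset.mem_filter, Finset.mem_univ, true_and] at hp ⊢
  exact le_of_lt hp

lemma schatten_le_sqrt (hk2 : 2 ≤ k) {M : Matrix (Fin n) (Fin n) ℝ} (hM : M.IsHermitian) :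
    schatten k M ≤ Real.sqrt (∑ i, ∑ j, M i j ^ 2) := by
  have hk : 1 ≤ k := le_trans one_le_two hk2
  set S : ℝ := ∑ i, hM.eigenvalues i ^ 2 with hS
  have hS0 : 0 ≤ S := Finset.sum_nonneg fun i _ => sq_nonneg _
  have hroot : ∀ i, |hM.eigenvalues i| ≤ Real.sqrt S := by
    intro i
    rw [← Real.sqrt_sq_eq_abs]
    exact Real.sqrt_le_sqrt (Finset.single_le_sum
      (f := fun j => hM.eigenvalues j ^ 2) (fun j _ => sq_nonneg _) (Finset.mem_univ i))
  have hsum : ∑ i, |hM.eigenvalues i| ^ k ≤ Real.sqrt S ^ k := by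
    calc ∑ i, |hM.eigenvalues i| ^ k
        = ∑ i, |hM.eigenvalues i| ^ 2 * |hM.eigenvalues i| ^ (k - 2) := by
          refine Finset.sum_congr rfl fun i _ => ?_
          rw [← pow_add]
          congr 1
          omega
      _ ≤ ∑ i, hM.eigenvalues i ^ 2 * Real.sqrt S ^ (k - 2) := by
          refine Finset.sum_le_sum fun i _ => ?_
          rw [sq_abs]
          exact mul_le_mul_of_nonneg_left
            (pow_le_pow_left₀ (abs_nonneg _) (hroot i) _) (sq_nonneg _)
      _ = S * Real.sqrt S ^ (k - 2) := by rw [← Finset.sum_mul]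
      _ = Real.sqrt S ^ k := by
          nth_rewrite 1 [← Real.sq_sqrt hS0]
          rw [← pow_add]
          congr 1
          omega
  have hfinal : schatten k M ≤ Real.sqrt S := by
    rw [schatten_eq hM]
    calc (∑ i, |hM.eigenvalues i| ^ k) ^ ((1:ℝ)/k)
        ≤ (Real.sqrt S ^ k) ^ ((1:ℝ)/k) :=
          aux_rpow_mono (Finset.sum_nonneg fun i _ => by positivity) hsum
      _ = Real.sqrt S := by
          rw [← Real.rpow_natCast (Real.sqrt S) k, ← Real.rpow_mul (Real.sqrt_nonneg _),
            mul_one_div, div_self (by positivity : (k:ℝ) ≠ 0), Real.rpow_one]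
  rw [hS, aux_eig_sq hM] at hfinal
  exact hfinal

lemma schatten_one_le_sqrt {M : Matrix (Fin n) (Fin n) ℝ} (hM : M.IsHermitian) :
    schatten 1 M ≤ Real.sqrt ((n : ℝ) * ∑ i, ∑ j, M i j ^ 2) := by
  have h1 : schatten 1 M = ∑ i, |hM.eigenvalues i| := by
    rw [schatten_eq hM]
    simp [Real.rpow_natCast]
  have hcs : (∑ i, |hM.eigenvalues i|) ^ 2 ≤ (n : ℝ) * ∑ i, hM.eigenvalues i ^ 2 := by
    have := Finset.sum_mul_sq_le_sq_mul_sq Finset.univ (fun _ : Fin n => (1:ℝ))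
      (fun i => |hM.eigenvalues i|)
    simpa [sq_abs, Finset.card_univ] using this
  rw [h1, ← Real.sqrt_sq (Finset.sum_nonneg fun i _ => abs_nonneg _)]
  refine Real.sqrt_le_sqrt ?_
  calc (∑ i, |hM.eigenvalues i|) ^ 2 ≤ (n : ℝ) * ∑ i, hM.eigenvalues i ^ 2 := hcs
    _ = (n : ℝ) * ∑ i, ∑ j, M i j ^ 2 := by rw [aux_eig_sq hM]

/-- **`k`-Schatten norms**: `A ↦ ‖A‖_k` is convex on real symmetric matrices; it is
`√2`-Lipschitz (for `k ≥ 2`) and `√(2n)`-Lipschitz (for `k = 1`) with respect to the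
Euclidean norm on the upper-triangular entries. -/
theorem schatten_convex_lipschitz (n k : ℕ) (hn : 1 ≤ n) (hk : 1 ≤ k) :
    ConvexOn ℝ {A : Matrix (Fin n) (Fin n) ℝ | A.IsHermitian} (schatten k) ∧
    (2 ≤ k → ∀ A B : Matrix (Fin n) (Fin n) ℝ, A.IsHermitian → B.IsHermitian →
      |schatten k A - schatten k B| ≤ Real.sqrt 2 * Real.sqrt (upperSq A B)) ∧
    (k = 1 → ∀ A B : Matrix (Fin n) (Fin n) ℝ, A.IsHermitian → B.IsHermitian →
      |schatten k A - schatten k B| ≤ Real.sqrt (2 * n) * Real.sqrt (upperSq A B)) := by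
  have hupper : ∀ A B : Matrix (Fin n) (Fin n) ℝ,
      (∑ p ∈ Finset.univ.filter (fun p : Fin n × Fin n => p.1 ≤ p.2), ((A - B) p.1 p.2) ^ 2)
        = upperSq A B := by
    intro A B
    exact Finset.sum_congr rfl fun p _ => by rw [Matrix.sub_apply]
  have hsymAB : ∀ A B : Matrix (Fin n) (Fin n) ℝ, A.IsHermitian → B.IsHermitian →
      ∀ i j, (A - B) j i = (A - B) i j := by
    intro A B hA hB i j
    have h := hA.sub hB
    conv_lhs => rw [← h]
    simp [Matrix.conjTranspose_apply]
  have hupper0 : ∀ A B : Matrix (Fin n) (Fin n) ℝ, 0 ≤ upperSq A B := by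
    intro A B
    exact Finset.sum_nonneg fun p _ => sq_nonneg _
  refine ⟨schatten_convexOn hk, ?_, ?_⟩
  · intro hk2 A B hA hB
    calc |schatten k A - schatten k B| ≤ schatten k (A - B) :=
          schatten_abs_sub_le hk A B hA hB
      _ ≤ Real.sqrt (∑ i, ∑ j, (A - B) i j ^ 2) := schatten_le_sqrt hk2 (hA.sub hB)
      _ ≤ Real.sqrt (2 * upperSq A B) := by
          refine Real.sqrt_le_sqrt ?_
          calc ∑ i, ∑ j, (A - B) i j ^ 2
              ≤ 2 * ∑ p ∈ Finset.univ.filter (fun p : Fin n × Fin n => p.1 ≤ p.2),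
                ((A - B) p.1 p.2) ^ 2 := aux_sum_sq_le _ (hsymAB A B hA hB)
            _ = 2 * upperSq A B := by rw [hupper A B]
      _ = Real.sqrt 2 * Real.sqrt (upperSq A B) := Real.sqrt_mul (by norm_num) _
  · intro hk1 A B hA hB
    subst hk1
    calc |schatten 1 A - schatten 1 B| ≤ schatten 1 (A - B) :=
          schatten_abs_sub_le le_rfl A B hA hB
      _ ≤ Real.sqrt ((n : ℝ) * ∑ i, ∑ j, (A - B) i j ^ 2) :=
          schatten_one_le_sqrt (hA.sub hB)
      _ ≤ Real.sqrt ((2 * n) * upperSq A B) := by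
          refine Real.sqrt_le_sqrt ?_
          calc (n : ℝ) * ∑ i, ∑ j, (A - B) i j ^ 2
              ≤ (n : ℝ) * (2 * upperSq A B) := by
                refine mul_le_mul_of_nonneg_left ?_ (by positivity)
                calc ∑ i, ∑ j, (A - B) i j ^ 2
                    ≤ 2 * ∑ p ∈ Finset.univ.filter (fun p : Fin n × Fin n => p.1 ≤ p.2),
                      ((A - B) p.1 p.2) ^ 2 := aux_sum_sq_le _ (hsymAB A B hA hB)
                  _ = 2 * upperSq A B := by rw [hupper A B]
            _ = (2 * n) * upperSq A B := by ring
      _ = Real.sqrt (2 * n) * Real.sqrt (upperSq A B) :=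
          Real.sqrt_mul (by positivity) _
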